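/- Let Q(l) := lim_{k→∞} k^{2/l} e_k(N(0,I_l))². Let l_0, l ∈ ℕ with l ≥ l_0 and write l = n l_0 + m with n ∈ ℕ and m ∈ {0, …, l_0 − 1}. Then Q(l) ≤ n Q(l_0) + m Q(1). -/

import Mathlib

open MeasureTheory ProbabilityTheory Real Filter

noncomputable section

/-- Minimal `n`-th `L²` quantization error of a probability measure `μ` on a normed space. -/
def quantErrMeas {E : Type*} [NormedAddCommGroup E] [MeasurableSpace E]
    (μ : Measure E) (n : ℕ) : ℝ :=
  sInf { r : ℝ | ∃ α : Finset E, α.Nonempty ∧ α.card ≤ n ∧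
    r = (∫ x, (⨅ a : α, ‖x - (a : E)‖ ^ 2) ∂μ) ^ (1/2 : ℝ) }

/-- The standard Gaussian distribution `N(0, I_l)` on `ℝ^l` with the Euclidean norm. -/
def stdGaussian (l : ℕ) : Measure (EuclideanSpace ℝ (Fin l)) :=
  (Measure.pi fun _ : Fin l => gaussianReal 0 1).map (EuclideanSpace.equiv (Fin l) ℝ).symm

/-! ### Auxiliary material -/

set_option linter.unusedSectionVars false

section Aux

/-- Second moment of the standard Gaussian. -/
lemma QB_integrable_sq_gaussian : Integrable (fun x : ℝ => x ^ 2) (gaussianReal 0 1) := by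
  rw [gaussianReal_of_var_ne_zero 0 one_ne_zero]
  rw [integrable_withDensity_iff (measurable_gaussianPDF 0 1)
    (ae_of_all _ fun x => ENNReal.ofReal_lt_top)]
  have hb : (0:ℝ) < 1/4 := by norm_num
  apply Integrable.mono' ((integrable_exp_neg_mul_sq hb).const_mul ((Real.sqrt (2*π))⁻¹ * 4))
  · apply Measurable.aestronglyMeasurable
    exact (measurable_id.pow_const 2).mul
      ((measurable_gaussianPDF 0 1).ennreal_toReal)
  · refine ae_of_all _ fun x => ?_
    have h1 : (gaussianPDF 0 1 x).toReal = gaussianPDFReal 0 1 x :=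
      ENNReal.toReal_ofReal (gaussianPDFReal_nonneg 0 1 x)
    rw [Real.norm_eq_abs, abs_mul, abs_of_nonneg (sq_nonneg x), h1,
      abs_of_nonneg (gaussianPDFReal_nonneg 0 1 x)]
    unfold gaussianPDFReal
    simp only [NNReal.coe_one, mul_one, sub_zero]
    have key : x^2 * rexp (-(1/4)*x^2) ≤ 4 := by
      have h := Real.add_one_le_exp (x^2/4)
      have hE : rexp (-(1/4)*x^2) = (rexp (x^2/4))⁻¹ := by
        rw [← Real.exp_neg]; ring_nf
      rw [hE, ← div_eq_mul_inv, div_le_iff₀ (Real.exp_pos _)]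
      nlinarith
    have hsplit : rexp (-x^2/2) = rexp (-(1/4)*x^2) * rexp (-(1/4)*x^2) := by
      rw [← Real.exp_add]; ring_nf
    rw [hsplit]
    have h0 : (0:ℝ) ≤ (Real.sqrt (2*π))⁻¹ := inv_nonneg.2 (Real.sqrt_nonneg _)
    nlinarith [Real.exp_pos (-(1/4)*x^2),
      mul_le_mul_of_nonneg_right key (Real.exp_pos (-(1/4)*x^2)).le]

lemma QB_integrable_sub_sq_gaussian (c : ℝ) :
    Integrable (fun x : ℝ => (x - c) ^ 2) (gaussianReal 0 1) := by
  apply Integrable.mono' ((QB_integrable_sq_gaussian.const_mul 2).add (integrable_const (2 * c^2)))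
  · exact (Continuous.pow (by fun_prop) 2).aestronglyMeasurable
  · refine ae_of_all _ fun x => ?_
    rw [Real.norm_eq_abs, abs_of_nonneg (sq_nonneg _)]
    simp only [Pi.add_apply]
    nlinarith [sq_nonneg (x + c)]

lemma QB_map_eval_pi {ι : Type*} [Fintype ι] {α : ι → Type*} [∀ i, MeasurableSpace (α i)]
    (μ : ∀ i, Measure (α i)) [∀ i, IsProbabilityMeasure (μ i)] (i : ι) :
    (Measure.pi μ).map (Function.eval i) = μ i := by
  classical
  ext s hs
  rw [Measure.map_apply (measurable_pi_apply i) hs, Set.eval_preimage, Measure.pi_pi]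
  rw [Finset.prod_eq_single i (fun j _ hj => by simp [Function.update_of_ne hj]) (by simp)]
  simp

/-- The underlying product Gaussian on the plain pi type. -/
def QBgpi (l : ℕ) : Measure (Fin l → ℝ) := Measure.pi fun _ : Fin l => gaussianReal 0 1

instance QBgpi_prob (l : ℕ) : IsProbabilityMeasure (QBgpi l) := by
  unfold QBgpi; infer_instance

lemma QB_integrable_coord_sub_sq (l : ℕ) (i : Fin l) (c : ℝ) :
    Integrable (fun x : Fin l → ℝ => (x i - c) ^ 2) (QBgpi l) := by
  have h := QB_integrable_sub_sq_gaussian c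
  rw [← QB_map_eval_pi (fun _ : Fin l => gaussianReal 0 1) i] at h
  rw [integrable_map_measure ((show Continuous (fun x : ℝ => (x - c) ^ 2) by fun_prop).aestronglyMeasurable)
    (show AEMeasurable (Function.eval i) (Measure.pi fun _ : Fin l => gaussianReal 0 1) from
      (measurable_pi_apply i).aemeasurable)] at h
  exact h

lemma QB_stdGaussian_eq (l : ℕ) :
    stdGaussian l = (QBgpi l).map ((MeasurableEquiv.toLp 2 (Fin l → ℝ)).symm).symm := rfl

instance QB_stdGaussian_prob (l : ℕ) : IsProbabilityMeasure (stdGaussian l) := by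
  rw [QB_stdGaussian_eq]
  exact Measure.isProbabilityMeasure_map
    ((MeasurableEquiv.toLp 2 (Fin l → ℝ)).symm).symm.measurable.aemeasurable

lemma QB_normsq_eq (l : ℕ) (x : EuclideanSpace ℝ (Fin l)) : ‖x‖^2 = ∑ i, (x i)^2 := by
  rw [EuclideanSpace.norm_eq, Real.sq_sqrt (by positivity)]
  simp [Real.norm_eq_abs, sq_abs]

/-- Splitting `ℝ^{a+b}` into `ℝ^a × ℝ^b` on the pi-type level. -/
def QBsplitEquiv (a b : ℕ) : ((Fin a → ℝ) × (Fin b → ℝ)) ≃ᵐ (Fin (a+b) → ℝ) :=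
  (MeasurableEquiv.sumPiEquivProdPi (fun _ : Fin a ⊕ Fin b => ℝ)).symm.trans
    (MeasurableEquiv.piCongrLeft (fun _ => ℝ) finSumFinEquiv)

lemma QBsplitEquiv_mp (a b : ℕ) :
    MeasurePreserving (QBsplitEquiv a b) ((QBgpi a).prod (QBgpi b)) (QBgpi (a+b)) := by
  have h1 := measurePreserving_sumPiEquivProdPi_symm
    (fun _ : Fin a ⊕ Fin b => gaussianReal 0 1)
  have h2 := measurePreserving_piCongrLeft
    (fun _ : Fin (a+b) => gaussianReal 0 1) finSumFinEquiv
  unfold QBsplitEquiv QBgpi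
  rw [MeasurableEquiv.coe_trans]
  exact h2.comp h1

lemma QBsplitEquiv_left (a b : ℕ) (p : (Fin a → ℝ) × (Fin b → ℝ)) (i : Fin a) :
    QBsplitEquiv a b p (Fin.castAdd b i) = p.1 i := by
  simp [QBsplitEquiv, MeasurableEquiv.trans, MeasurableEquiv.coe_piCongrLeft,
    ← finSumFinEquiv_apply_left, Equiv.piCongrLeft_apply_apply]
  exact (MeasurableEquiv.piCongrLeft_apply_apply finSumFinEquiv (β := fun _ => ℝ)
    ((MeasurableEquiv.sumPiEquivProdPi (fun _ : Fin a ⊕ Fin b => ℝ)).symm p) (Sum.inl i)).trans rfl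

lemma QBsplitEquiv_right (a b : ℕ) (p : (Fin a → ℝ) × (Fin b → ℝ)) (j : Fin b) :
    QBsplitEquiv a b p (Fin.natAdd a j) = p.2 j := by
  simp [QBsplitEquiv, MeasurableEquiv.trans, MeasurableEquiv.coe_piCongrLeft,
    ← finSumFinEquiv_apply_right, Equiv.piCongrLeft_apply_apply]
  exact (MeasurableEquiv.piCongrLeft_apply_apply finSumFinEquiv (β := fun _ => ℝ)
    ((MeasurableEquiv.sumPiEquivProdPi (fun _ : Fin a ⊕ Fin b => ℝ)).symm p) (Sum.inr j)).trans rfl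

/-- Splitting `ℝ^{a+b}` into `ℝ^a × ℝ^b` on the Euclidean-space level. -/
def QBemb (a b : ℕ) :
    (EuclideanSpace ℝ (Fin a) × EuclideanSpace ℝ (Fin b)) ≃ᵐ EuclideanSpace ℝ (Fin (a+b)) :=
  (((MeasurableEquiv.toLp 2 (Fin a → ℝ)).symm).prodCongr
      ((MeasurableEquiv.toLp 2 (Fin b → ℝ)).symm)).trans
    ((QBsplitEquiv a b).trans ((MeasurableEquiv.toLp 2 (Fin (a+b) → ℝ)).symm).symm)

lemma QBemb_apply_castAdd (a b : ℕ) (p : EuclideanSpace ℝ (Fin a) × EuclideanSpace ℝ (Fin b))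
    (i : Fin a) : QBemb a b p (Fin.castAdd b i) = p.1 i := by
  show QBsplitEquiv a b (_, _) (Fin.castAdd b i) = _
  rw [QBsplitEquiv_left]
  rfl

lemma QBemb_apply_natAdd (a b : ℕ) (p : EuclideanSpace ℝ (Fin a) × EuclideanSpace ℝ (Fin b))
    (j : Fin b) : QBemb a b p (Fin.natAdd a j) = p.2 j := by
  show QBsplitEquiv a b (_, _) (Fin.natAdd a j) = _
  rw [QBsplitEquiv_right]
  rfl

lemma QBemb_norm (a b : ℕ) (p q : EuclideanSpace ℝ (Fin a) × EuclideanSpace ℝ (Fin b)) :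
    ‖QBemb a b p - QBemb a b q‖^2 = ‖p.1 - q.1‖^2 + ‖p.2 - q.2‖^2 := by
  rw [QB_normsq_eq, QB_normsq_eq, QB_normsq_eq, Fin.sum_univ_add]
  congr 1
  · refine Finset.sum_congr rfl fun i _ => ?_
    simp only [PiLp.sub_apply, QBemb_apply_castAdd]
  · refine Finset.sum_congr rfl fun j _ => ?_
    simp only [PiLp.sub_apply, QBemb_apply_natAdd]

lemma QBemb_mp (a b : ℕ) :
    MeasurePreserving (QBemb a b) ((stdGaussian a).prod (stdGaussian b)) (stdGaussian (a+b)) := by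
  have ha : MeasurePreserving ((MeasurableEquiv.toLp 2 (Fin a → ℝ)).symm) (stdGaussian a)
      (QBgpi a) := by
    rw [QB_stdGaussian_eq]
    exact ⟨((MeasurableEquiv.toLp 2 (Fin a → ℝ)).symm).measurable,
      ((MeasurableEquiv.toLp 2 (Fin a → ℝ)).symm).map_map_symm⟩
  have hb : MeasurePreserving ((MeasurableEquiv.toLp 2 (Fin b → ℝ)).symm) (stdGaussian b)
      (QBgpi b) := by
    rw [QB_stdGaussian_eq]
    exact ⟨((MeasurableEquiv.toLp 2 (Fin b → ℝ)).symm).measurable,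
      ((MeasurableEquiv.toLp 2 (Fin b → ℝ)).symm).map_map_symm⟩
  have hc : MeasurePreserving ((MeasurableEquiv.toLp 2 (Fin (a+b) → ℝ)).symm).symm
      (QBgpi (a+b)) (stdGaussian (a+b)) :=
    ⟨((MeasurableEquiv.toLp 2 (Fin (a+b) → ℝ)).symm).symm.measurable,
      (QB_stdGaussian_eq (a+b)).symm⟩
  have hprod := ha.prod hb
  have := (hc.comp ((QBsplitEquiv_mp a b).comp hprod))
  unfold QBemb
  rw [MeasurableEquiv.coe_trans, MeasurableEquiv.coe_trans]
  convert this using 2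
  rfl

variable {E : Type*} [NormedAddCommGroup E] [MeasurableSpace E]

lemma QB_iInf_finset_eq_inf' (α : Finset E) (hα : α.Nonempty) (f : E → ℝ) :
    (⨅ a : α, f (a : E)) = α.inf' hα f := by
  have h : Set.range (fun a : α => f (a : E)) = f '' (↑α : Set E) := by
    ext y; simp
  rw [iInf, h, Finset.inf'_eq_csInf_image]

lemma QB_iInf_dist_eq_inf' (α : Finset E) (hα : α.Nonempty) (x : E) :
    (⨅ a : α, ‖x - (a : E)‖ ^ 2) = α.inf' hα (fun a => ‖x - a‖ ^ 2) :=
  QB_iInf_finset_eq_inf' α hα (fun a => ‖x - a‖ ^ 2)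

lemma QB_minDist_nonneg (α : Finset E) (hα : α.Nonempty) (x : E) :
    0 ≤ α.inf' hα (fun a => ‖x - a‖ ^ 2) :=
  Finset.le_inf' hα _ (fun a _ => sq_nonneg _)

lemma QB_minDist_continuous [NormedSpace ℝ E] (α : Finset E) (hα : α.Nonempty) :
    Continuous (fun x : E => α.inf' hα (fun a => ‖x - a‖ ^ 2)) := by
  exact Continuous.finset_inf'_apply hα (fun a _ => by fun_prop)

lemma QB_quantErr_nonneg (μ : Measure E) (n : ℕ) : 0 ≤ quantErrMeas μ n := by
  apply Real.sInf_nonneg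
  rintro r ⟨α, hne, hcard, rfl⟩
  have : Nonempty α := hne.to_subtype
  refine Real.rpow_nonneg (integral_nonneg fun x => ?_) _
  show (0:ℝ) ≤ _
  rw [QB_iInf_dist_eq_inf' α hne]
  exact QB_minDist_nonneg α hne x

lemma QB_quantErr_le (μ : Measure E) (n : ℕ) (α : Finset E) (hne : α.Nonempty)
    (hcard : α.card ≤ n) :
    quantErrMeas μ n ≤ (∫ x, (⨅ a : α, ‖x - (a : E)‖ ^ 2) ∂μ) ^ (1/2 : ℝ) := by
  apply csInf_le
  · refine ⟨0, ?_⟩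
    rintro r ⟨β, hβne, hβcard, rfl⟩
    have : Nonempty β := hβne.to_subtype
    refine Real.rpow_nonneg (integral_nonneg fun x => ?_) _
    show (0:ℝ) ≤ _
    rw [QB_iInf_dist_eq_inf' β hβne]
    exact QB_minDist_nonneg β hβne x
  · exact ⟨α, hne, hcard, rfl⟩

lemma QB_quantErr_exists_near (μ : Measure E) (n : ℕ) (hn : 1 ≤ n) {ε : ℝ} (hε : 0 < ε) :
    ∃ (α : Finset E) (hne : α.Nonempty), α.card ≤ n ∧
      ∫ x, α.inf' hne (fun a => ‖x - a‖ ^ 2) ∂μ ≤ (quantErrMeas μ n + ε) ^ 2 := by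
  have hSne : Set.Nonempty { r : ℝ | ∃ α : Finset E, α.Nonempty ∧ α.card ≤ n ∧
      r = (∫ x, (⨅ a : α, ‖x - (a : E)‖ ^ 2) ∂μ) ^ (1/2 : ℝ) } :=
    ⟨_, ⟨{0}, Finset.singleton_nonempty 0, by simpa using hn, rfl⟩⟩
  obtain ⟨r, hrS, hrlt⟩ := exists_lt_of_csInf_lt hSne
    (show quantErrMeas μ n < quantErrMeas μ n + ε by linarith)
  obtain ⟨α, hne, hcard, rfl⟩ := hrS
  have : Nonempty α := hne.to_subtype
  have hint : 0 ≤ ∫ x, (⨅ a : α, ‖x - (a : E)‖ ^ 2) ∂μ := by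
    refine integral_nonneg fun x => ?_
    show (0:ℝ) ≤ _
    rw [QB_iInf_dist_eq_inf' α hne]; exact QB_minDist_nonneg α hne x
  refine ⟨α, hne, hcard, ?_⟩
  have heq : ∫ x, α.inf' hne (fun a => ‖x - a‖ ^ 2) ∂μ
      = ∫ x, (⨅ a : α, ‖x - (a : E)‖ ^ 2) ∂μ := by
    congr 1; funext x; rw [QB_iInf_dist_eq_inf' α hne]
  rw [heq]
  have h2 : ((∫ x, (⨅ a : α, ‖x - (a : E)‖ ^ 2) ∂μ) ^ (1/2 : ℝ)) ^ 2
      = ∫ x, (⨅ a : α, ‖x - (a : E)‖ ^ 2) ∂μ := by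
    rw [← Real.rpow_natCast (_ ^ (1/2:ℝ)) 2, ← Real.rpow_mul hint]
    norm_num
  calc ∫ x, (⨅ a : α, ‖x - (a : E)‖ ^ 2) ∂μ
      = ((∫ x, (⨅ a : α, ‖x - (a : E)‖ ^ 2) ∂μ) ^ (1/2 : ℝ)) ^ 2 := h2.symm
    _ ≤ (quantErrMeas μ n + ε) ^ 2 := by
        apply pow_le_pow_left₀ (Real.rpow_nonneg hint _) hrlt.le

lemma QB_integrable_dist_sq (l : ℕ) (c : EuclideanSpace ℝ (Fin l)) :
    Integrable (fun x => ‖x - c‖ ^ 2) (stdGaussian l) := by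
  rw [QB_stdGaussian_eq, integrable_map_equiv]
  have heq : ((fun x : EuclideanSpace ℝ (Fin l) => ‖x - c‖ ^ 2) ∘
      ((MeasurableEquiv.toLp 2 (Fin l → ℝ)).symm).symm) =
      fun y : Fin l → ℝ => ∑ i, (y i - c i) ^ 2 := by
    funext y
    simp only [Function.comp_apply]
    rw [QB_normsq_eq]
    refine Finset.sum_congr rfl fun i _ => ?_
    simp [PiLp.sub_apply]
  rw [heq]
  exact integrable_finset_sum _ (fun i _ => QB_integrable_coord_sub_sq l i (c i))

lemma QB_integrable_minDist (l : ℕ) (α : Finset (EuclideanSpace ℝ (Fin l))) (hα : α.Nonempty) :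
    Integrable (fun x => α.inf' hα (fun a => ‖x - a‖ ^ 2)) (stdGaussian l) := by
  obtain ⟨a₀, ha₀⟩ := hα
  apply Integrable.mono' (QB_integrable_dist_sq l a₀)
    (QB_minDist_continuous α ⟨a₀, ha₀⟩).aestronglyMeasurable
  refine ae_of_all _ fun x => ?_
  rw [Real.norm_eq_abs, abs_of_nonneg (QB_minDist_nonneg α ⟨a₀, ha₀⟩ x)]
  exact Finset.inf'_le _ ha₀

/-- Subadditivity of the squared quantization error under product quantizers. -/
lemma QB_subadd (a b k₁ k₂ : ℕ) (hk₁ : 1 ≤ k₁) (hk₂ : 1 ≤ k₂) :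
    quantErrMeas (stdGaussian (a+b)) (k₁*k₂) ^ 2
      ≤ quantErrMeas (stdGaussian a) k₁ ^ 2 + quantErrMeas (stdGaussian b) k₂ ^ 2 := by
  set e := quantErrMeas (stdGaussian (a+b)) (k₁*k₂) with he
  set e₁ := quantErrMeas (stdGaussian a) k₁ with he₁
  set e₂ := quantErrMeas (stdGaussian b) k₂ with he₂
  have key : ∀ ε : ℝ, 0 < ε → e ^ 2 ≤ (e₁ + ε) ^ 2 + (e₂ + ε) ^ 2 := by
    intro ε hε
    classical
    obtain ⟨α, hαne, hαcard, hαint⟩ := QB_quantErr_exists_near (stdGaussian a) k₁ hk₁ hε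
    obtain ⟨β, hβne, hβcard, hβint⟩ := QB_quantErr_exists_near (stdGaussian b) k₂ hk₂ hε
    set γ : Finset (EuclideanSpace ℝ (Fin (a+b))) := (α ×ˢ β).image (QBemb a b) with hγ
    have hγne : γ.Nonempty := (hαne.product hβne).image _
    have hγcard : γ.card ≤ k₁ * k₂ := by
      calc γ.card ≤ (α ×ˢ β).card := Finset.card_image_le
        _ = α.card * β.card := Finset.card_product α β
        _ ≤ k₁ * k₂ := Nat.mul_le_mul hαcard hβcard
    have h1 := QB_quantErr_le (stdGaussian (a+b)) (k₁*k₂) γ hγne hγcard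
    have hIeq : (∫ x, (⨅ c : γ, ‖x - (c : EuclideanSpace ℝ (Fin (a+b)))‖ ^ 2)
        ∂(stdGaussian (a+b)))
        = ∫ p, γ.inf' hγne (fun c => ‖QBemb a b p - c‖ ^ 2)
          ∂((stdGaussian a).prod (stdGaussian b)) := by
      rw [show (fun x : EuclideanSpace ℝ (Fin (a+b)) =>
          (⨅ c : γ, ‖x - (c : EuclideanSpace ℝ (Fin (a+b)))‖ ^ 2))
          = fun x => γ.inf' hγne (fun c => ‖x - c‖ ^ 2) from
        funext fun x => QB_iInf_dist_eq_inf' γ hγne x]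
      rw [← (QBemb_mp a b).integral_comp']
    have hpt : ∀ p : EuclideanSpace ℝ (Fin a) × EuclideanSpace ℝ (Fin b),
        γ.inf' hγne (fun c => ‖QBemb a b p - c‖ ^ 2)
          ≤ α.inf' hαne (fun u => ‖p.1 - u‖ ^ 2) + β.inf' hβne (fun v => ‖p.2 - v‖ ^ 2) := by
      intro p
      obtain ⟨u, hu, huq⟩ := Finset.exists_mem_eq_inf' hαne (fun u => ‖p.1 - u‖ ^ 2)
      obtain ⟨v, hv, hvq⟩ := Finset.exists_mem_eq_inf' hβne (fun v => ‖p.2 - v‖ ^ 2)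
      have hmem : QBemb a b (u, v) ∈ γ := by
        apply Finset.mem_image_of_mem
        exact Finset.mem_product.2 ⟨hu, hv⟩
      calc γ.inf' hγne (fun c => ‖QBemb a b p - c‖ ^ 2) ≤ ‖QBemb a b p - QBemb a b (u, v)‖ ^ 2 :=
            Finset.inf'_le _ hmem
        _ = ‖p.1 - u‖ ^ 2 + ‖p.2 - v‖ ^ 2 := QBemb_norm a b p (u, v)
        _ = _ := by rw [huq, hvq]
    have hint1 : Integrable (fun p : EuclideanSpace ℝ (Fin a) × EuclideanSpace ℝ (Fin b) =>
        α.inf' hαne (fun u => ‖p.1 - u‖ ^ 2)) ((stdGaussian a).prod (stdGaussian b)) := by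
      have := (QB_integrable_minDist a α hαne).mul_prod
        (integrable_const (1:ℝ) (μ := stdGaussian b))
      simpa using this
    have hint2 : Integrable (fun p : EuclideanSpace ℝ (Fin a) × EuclideanSpace ℝ (Fin b) =>
        β.inf' hβne (fun v => ‖p.2 - v‖ ^ 2)) ((stdGaussian a).prod (stdGaussian b)) := by
      have := (integrable_const (1:ℝ) (μ := stdGaussian a)).mul_prod
        (QB_integrable_minDist b β hβne)
      simpa using this
    have hmono : ∫ p, γ.inf' hγne (fun c => ‖QBemb a b p - c‖ ^ 2)
          ∂((stdGaussian a).prod (stdGaussian b))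
        ≤ ∫ p, (α.inf' hαne (fun u => ‖p.1 - u‖ ^ 2) + β.inf' hβne (fun v => ‖p.2 - v‖ ^ 2))
          ∂((stdGaussian a).prod (stdGaussian b)) := by
      apply integral_mono_of_nonneg
      · exact ae_of_all _ fun p => QB_minDist_nonneg γ hγne _
      · exact hint1.add hint2
      · exact ae_of_all _ hpt
    have hsplit : ∫ p, (α.inf' hαne (fun u => ‖p.1 - u‖ ^ 2)
          + β.inf' hβne (fun v => ‖p.2 - v‖ ^ 2)) ∂((stdGaussian a).prod (stdGaussian b))
        = (∫ x, α.inf' hαne (fun u => ‖x - u‖ ^ 2) ∂(stdGaussian a))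
          + ∫ y, β.inf' hβne (fun v => ‖y - v‖ ^ 2) ∂(stdGaussian b) := by
      rw [integral_add hint1 hint2]
      congr 1
      · have := integral_prod_mul (μ := stdGaussian a) (ν := stdGaussian b)
          (fun x => α.inf' hαne (fun u => ‖x - u‖ ^ 2)) (fun _ => (1:ℝ))
        simpa using this
      · have := integral_prod_mul (μ := stdGaussian a) (ν := stdGaussian b)
          (fun _ => (1:ℝ)) (fun y => β.inf' hβne (fun v => ‖y - v‖ ^ 2))
        simpa using this
    have hIpos : 0 ≤ ∫ x, (⨅ c : γ, ‖x - (c : EuclideanSpace ℝ (Fin (a+b)))‖ ^ 2)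
        ∂(stdGaussian (a+b)) := by
      refine integral_nonneg fun x => ?_
      show (0:ℝ) ≤ _
      rw [QB_iInf_dist_eq_inf' γ hγne]
      exact QB_minDist_nonneg γ hγne x
    have hsq : e ^ 2 ≤ ∫ x, (⨅ c : γ, ‖x - (c : EuclideanSpace ℝ (Fin (a+b)))‖ ^ 2)
        ∂(stdGaussian (a+b)) := by
      have h2 : ((∫ x, (⨅ c : γ, ‖x - (c : EuclideanSpace ℝ (Fin (a+b)))‖ ^ 2)
          ∂(stdGaussian (a+b))) ^ (1/2 : ℝ)) ^ 2
          = ∫ x, (⨅ c : γ, ‖x - (c : EuclideanSpace ℝ (Fin (a+b)))‖ ^ 2)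
            ∂(stdGaussian (a+b)) := by
        rw [← Real.rpow_natCast (_ ^ (1/2:ℝ)) 2, ← Real.rpow_mul hIpos]
        norm_num
      calc e ^ 2 ≤ ((∫ x, (⨅ c : γ, ‖x - (c : EuclideanSpace ℝ (Fin (a+b)))‖ ^ 2)
            ∂(stdGaussian (a+b))) ^ (1/2 : ℝ)) ^ 2 :=
          pow_le_pow_left₀ (QB_quantErr_nonneg _ _) h1 2
        _ = _ := h2
    calc e ^ 2 ≤ _ := hsq
      _ = _ := hIeq
      _ ≤ _ := hmono
      _ = _ := hsplit
      _ ≤ (e₁ + ε) ^ 2 + (e₂ + ε) ^ 2 := add_le_add hαint hβint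
  have h1 : 0 ≤ e₁ := QB_quantErr_nonneg _ _
  have h2 : 0 ≤ e₂ := QB_quantErr_nonneg _ _
  refine le_of_forall_pos_le_add fun ε hε => ?_
  have hδ : 0 < min 1 (ε / (2 * (e₁ + e₂ + 1))) := by positivity
  have hk := key _ hδ
  have hδ1 : min 1 (ε / (2 * (e₁ + e₂ + 1))) ≤ 1 := min_le_left _ _
  have hδ2 : min 1 (ε / (2 * (e₁ + e₂ + 1))) ≤ ε / (2 * (e₁ + e₂ + 1)) := min_le_right _ _
  have hpos : (0:ℝ) < 2 * (e₁ + e₂ + 1) := by linarith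
  rw [le_div_iff₀ hpos] at hδ2
  nlinarith [hδ.le, hδ1, hδ2, hk, h1, h2, mul_pos hδ hδ]

lemma QB_quantErr_zero_dim (k : ℕ) (hk : 1 ≤ k) : quantErrMeas (stdGaussian 0) k = 0 := by
  refine le_antisymm ?_ (QB_quantErr_nonneg _ _)
  have h := QB_quantErr_le (stdGaussian 0) k {0} (Finset.singleton_nonempty 0)
    (by simpa using hk)
  have hzero : (fun x : EuclideanSpace ℝ (Fin 0) =>
      (⨅ a : ({0} : Finset (EuclideanSpace ℝ (Fin 0))), ‖x - (a : EuclideanSpace ℝ (Fin 0))‖ ^ 2))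
      = fun _ => (0:ℝ) := by
    funext x
    have : ∀ a : ({0} : Finset (EuclideanSpace ℝ (Fin 0))),
        ‖x - (a : EuclideanSpace ℝ (Fin 0))‖ ^ 2 = 0 := by
      intro a; rw [QB_normsq_eq]; simp
    simp only [this]
    exact ciInf_const
  rw [hzero] at h
  simpa using h

lemma QB_g_subadd (j : ℕ) (hj : 1 ≤ j) (c d : ℕ) :
    quantErrMeas (stdGaussian (c+d)) (j^(c+d)) ^ 2
      ≤ quantErrMeas (stdGaussian c) (j^c) ^ 2 + quantErrMeas (stdGaussian d) (j^d) ^ 2 := by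
  have := QB_subadd c d (j^c) (j^d) (Nat.one_le_pow _ _ hj) (Nat.one_le_pow _ _ hj)
  rwa [← pow_add] at this

lemma QB_blocks1 (j : ℕ) (hj : 1 ≤ j) (m : ℕ) :
    quantErrMeas (stdGaussian m) (j^m) ^ 2 ≤ m * quantErrMeas (stdGaussian 1) (j^1) ^ 2 := by
  induction m with
  | zero => simp [QB_quantErr_zero_dim 1 le_rfl]
  | succ m ih =>
    have h := QB_g_subadd j hj m 1
    push_cast
    linarith [h, ih]

lemma QB_blocks (l₀ j : ℕ) (hj : 1 ≤ j) (n m : ℕ) :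
    quantErrMeas (stdGaussian (n*l₀+m)) (j^(n*l₀+m)) ^ 2
      ≤ n * quantErrMeas (stdGaussian l₀) (j^l₀) ^ 2
        + m * quantErrMeas (stdGaussian 1) (j^1) ^ 2 := by
  induction n with
  | zero =>
    rw [Nat.zero_mul, Nat.zero_add]
    simpa using QB_blocks1 j hj m
  | succ n ih =>
    have harith : (n+1)*l₀ + m = (n*l₀ + m) + l₀ := by ring
    rw [harith]
    have h := QB_g_subadd j hj (n*l₀+m) l₀
    push_cast
    push_cast at ih
    nlinarith [h, ih]

end Aux

/-- Writing `l = n l₀ + m` with `0 ≤ m < l₀ ≤ l`, the Zador constants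
`Q(l) = lim_{k→∞} k^{2/l} e_k(N(0,I_l))²` satisfy `Q(l) ≤ n Q(l₀) + m Q(1)`. -/
theorem Qconst_block_inequality
    (Q : ℕ → ℝ)
    (hQ : ∀ l : ℕ, 1 ≤ l →
      Tendsto (fun k : ℕ => (k : ℝ) ^ (2 / (l : ℝ)) * (quantErrMeas (stdGaussian l) k) ^ 2)
        atTop (nhds (Q l)))
    (l₀ l n m : ℕ) (hl₀ : 1 ≤ l₀) (hl : l₀ ≤ l)
    (hdecomp : l = n * l₀ + m) (hm : m < l₀) :
    Q l ≤ n * Q l₀ + m * Q 1 := by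
  have hl1 : 1 ≤ l := le_trans hl₀ hl
  have hpow : ∀ d : ℕ, 1 ≤ d → Tendsto (fun j : ℕ => j ^ d) atTop atTop := by
    intro d hd
    apply tendsto_atTop_mono (fun j => Nat.le_self_pow (by omega) j) tendsto_id
  have hscale : ∀ d : ℕ, 1 ≤ d → ∀ j : ℕ,
      ((j ^ d : ℕ) : ℝ) ^ (2 / (d : ℝ)) = (j : ℝ) ^ 2 := by
    intro d hd j
    have hd0 : (d:ℝ) ≠ 0 := by positivity
    push_cast
    rw [← Real.rpow_natCast (j:ℝ) d, ← Real.rpow_natCast (j:ℝ) 2,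
      ← Real.rpow_mul (Nat.cast_nonneg j)]
    congr 1
    field_simp
    norm_num
  have hlim : ∀ d : ℕ, 1 ≤ d →
      Tendsto (fun j : ℕ => (j:ℝ)^2 * quantErrMeas (stdGaussian d) (j^d) ^ 2) atTop
        (nhds (Q d)) := by
    intro d hd
    have h := (hQ d hd).comp (hpow d hd)
    refine h.congr fun j => ?_
    simp only [Function.comp_apply]
    rw [hscale d hd j]
  have hL := hlim l hl1
  have hR : Tendsto (fun j : ℕ => (n:ℝ) * ((j:ℝ)^2 * quantErrMeas (stdGaussian l₀) (j^l₀) ^ 2)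
      + (m:ℝ) * ((j:ℝ)^2 * quantErrMeas (stdGaussian 1) (j^1) ^ 2)) atTop
      (nhds ((n:ℝ) * Q l₀ + (m:ℝ) * Q 1)) :=
    ((hlim l₀ hl₀).const_mul _).add ((hlim 1 le_rfl).const_mul _)
  refine le_of_tendsto_of_tendsto' hL hR fun j => ?_
  rcases Nat.eq_zero_or_pos j with rfl | hj
  · simp
  · have hb := QB_blocks l₀ j hj n m
    rw [hdecomp]
    nlinarith [mul_le_mul_of_nonneg_left hb (sq_nonneg (j:ℝ))]

end
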